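/- For all real a > 0, b ≠ 0 and t, the following integral identity holds: ∫₀ᵗ erf(aλ)·λ·e^{bλ} dλ = (1/b)·[t − 1/b]·erf(at)·e^{bt} − (1/b)·exp(b²/(4a²))·{[b/(2a²) − 1/b]·erf(at − b/(2a)) − (1/(a√π))·exp(−(at − b/(2a))²)} + (1/b)·exp(b²/(4a²))·{[b/(2a²) − 1/b]·erf(−b/(2a)) − (1/(a√π))·exp(−b²/(4a²))}. -/

import Mathlib

open Real intervalIntegral

/-- The error function. -/
noncomputable def erf (x : ℝ) : ℝ :=
  (2 / Real.sqrt π) * ∫ t in (0:ℝ)..x, Real.exp (-t ^ 2)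

lemma continuous_exp_neg_sq : Continuous fun t : ℝ => Real.exp (-t ^ 2) := by
  continuity

lemma erf_hasDerivAt (x : ℝ) :
    HasDerivAt erf ((2 / Real.sqrt π) * Real.exp (-x ^ 2)) x := by
  have h : HasDerivAt (fun y => ∫ t in (0:ℝ)..y, Real.exp (-t ^ 2))
      (Real.exp (-x ^ 2)) x :=
    intervalIntegral.integral_hasDerivAt_right
      (continuous_exp_neg_sq.intervalIntegrable _ _)
      (continuous_exp_neg_sq.stronglyMeasurableAtFilter _ _)
      continuous_exp_neg_sq.continuousAt
  exact h.const_mul _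

lemma erf_continuous : Continuous erf :=
  Differentiable.continuous (fun x => (erf_hasDerivAt x).differentiableAt)

lemma erf_zero : erf 0 = 0 := by
  simp [erf]

/-- Integral of `erf(aλ)·λ·e^{bλ}` over `[0, t]`. -/
theorem integral_erf_mul_id_mul_exp (a b t : ℝ) (ha : 0 < a) (hb : b ≠ 0) :
    ∫ l in (0:ℝ)..t, erf (a * l) * l * Real.exp (b * l) =
      (1 / b) * (t - 1 / b) * erf (a * t) * Real.exp (b * t) -
        (1 / b) * Real.exp (b ^ 2 / (4 * a ^ 2)) *
          ((b / (2 * a ^ 2) - 1 / b) * erf (a * t - b / (2 * a)) -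
            (1 / (a * Real.sqrt π)) * Real.exp (-(a * t - b / (2 * a)) ^ 2)) +
        (1 / b) * Real.exp (b ^ 2 / (4 * a ^ 2)) *
          ((b / (2 * a ^ 2) - 1 / b) * erf (-(b / (2 * a))) -
            (1 / (a * Real.sqrt π)) * Real.exp (-(b ^ 2 / (4 * a ^ 2)))) := by
  have ha' : a ≠ 0 := ha.ne'
  have hπ : Real.sqrt π ≠ 0 := by positivity
  set F : ℝ → ℝ := fun l =>
    (1 / b) * (l - 1 / b) * erf (a * l) * Real.exp (b * l) -
      (1 / b) * Real.exp (b ^ 2 / (4 * a ^ 2)) *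
        ((b / (2 * a ^ 2) - 1 / b) * erf (a * l - b / (2 * a)) -
          (1 / (a * Real.sqrt π)) * Real.exp (-(a * l - b / (2 * a)) ^ 2)) with hF
  have key : ∀ l : ℝ, HasDerivAt F (erf (a * l) * l * Real.exp (b * l)) l := by
    intro l
    have h1 : HasDerivAt (fun l : ℝ => a * l) a l := by
      simpa using (hasDerivAt_id l).const_mul a
    have h2 : HasDerivAt (fun l : ℝ => erf (a * l))
        ((2 / Real.sqrt π) * Real.exp (-(a * l) ^ 2) * a) l :=
      (erf_hasDerivAt (a * l)).comp l h1
    have h3 : HasDerivAt (fun l : ℝ => (1 / b) * (l - 1 / b)) (1 / b) l := by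
      simpa using ((hasDerivAt_id l).sub_const (1 / b)).const_mul (1 / b)
    have h5 : HasDerivAt (fun l : ℝ => Real.exp (b * l)) (Real.exp (b * l) * b) l := by
      have hb1 : HasDerivAt (fun l : ℝ => b * l) b l := by
        simpa using (hasDerivAt_id l).const_mul b
      exact (Real.hasDerivAt_exp (b * l)).comp l hb1
    have hA := ((h3.mul h2).mul h5)
    -- second piece
    have hg : HasDerivAt (fun l : ℝ => a * l - b / (2 * a)) a l := h1.sub_const _
    have he2 : HasDerivAt (fun l : ℝ => erf (a * l - b / (2 * a)))
        ((2 / Real.sqrt π) * Real.exp (-(a * l - b / (2 * a)) ^ 2) * a) l :=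
      (erf_hasDerivAt _).comp l hg
    have hsq : HasDerivAt (fun l : ℝ => -(a * l - b / (2 * a)) ^ 2)
        (-((2 : ℕ) * (a * l - b / (2 * a)) ^ 1 * a)) l := (hg.pow 2).neg
    have hexp2 : HasDerivAt (fun l : ℝ => Real.exp (-(a * l - b / (2 * a)) ^ 2))
        (Real.exp (-(a * l - b / (2 * a)) ^ 2) * (-((2 : ℕ) * (a * l - b / (2 * a)) ^ 1 * a))) l :=
      (Real.hasDerivAt_exp _).comp l hsq
    have hB := ((he2.const_mul (b / (2 * a ^ 2) - 1 / b)).sub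
        (hexp2.const_mul (1 / (a * Real.sqrt π)))).const_mul
        ((1 / b) * Real.exp (b ^ 2 / (4 * a ^ 2)))
    have H := hA.sub hB
    refine H.congr_deriv ?_
    simp only [Pi.mul_apply]
    have hE : Real.exp (-(a * l - b / (2 * a)) ^ 2) =
        Real.exp (-(a * l) ^ 2) * Real.exp (b * l) * (Real.exp (b ^ 2 / (4 * a ^ 2)))⁻¹ := by
      rw [← Real.exp_neg, ← Real.exp_add, ← Real.exp_add]
      congr 1
      field_simp
      ring_nf
    rw [hE]
    have h0 : Real.exp (b ^ 2 / (4 * a ^ 2)) ≠ 0 := Real.exp_ne_zero _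
    clear H hA hB h2 h5 he2 hexp2 hsq hE hg h1 h3 hF
    set E := Real.exp (b ^ 2 / (4 * a ^ 2)) with hEdef
    clear_value E
    set E1 := Real.exp (-(a * l) ^ 2) with hE1
    clear_value E1
    set E2 := Real.exp (b * l) with hE2
    clear_value E2
    field_simp
    ring
  have hcont : Continuous fun l : ℝ => erf (a * l) * l * Real.exp (b * l) := by
    exact ((erf_continuous.comp (by continuity)).mul continuous_id).mul (by continuity)
  have hInt := intervalIntegral.integral_eq_sub_of_hasDerivAt
    (fun l _ => key l) (hcont.intervalIntegrable 0 t)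
  rw [hInt, hF]
  have hz : a * (0:ℝ) = 0 := mul_zero a
  have hz2 : (a * (0:ℝ) - b / (2 * a)) = -(b / (2 * a)) := by ring
  have hz3 : (a * (0:ℝ) - b / (2 * a)) ^ 2 = b ^ 2 / (4 * a ^ 2) := by
    field_simp; ring_nf
  simp only [hz2, hz3, hz, erf_zero, mul_zero, Real.exp_zero]
  ring
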